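/- Let U be an open subset of ℂⁿ, let u : U → ℝ be a function, and let L be a family of outer measures on U. Assume that for every compact K ⊆ U and every δ > 0 there exists a compact subset S ⊆ K such that μ(K \ S) ≤ δ for every μ ∈ L, and the restriction of u to S is continuous. Then for every ε > 0 there exists an open subset U′ ⊆ U such that μ(U′) ≤ ε for every μ ∈ L, and the restriction of u to U \ U′ is continuous. -/

import Mathlib

open MeasureTheory Set

/-- Gluing (exhaustion) argument proving the quasi-continuity conclusion of Theorem 2.3,
uniform in a family `L` of outer measures: if on every compact `K ⊆ U` the function `u`
is continuous off a compact subset of uniformly small outer measure, then for every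
`ε > 0` there is an open `U' ⊆ U` with `μ U' ≤ ε` for all `μ ∈ L` such that `u`
restricted to `U \ U'` is continuous. -/
theorem quasicontinuity_gluing (n : ℕ) (U : Set (Fin n → ℂ)) (hU : IsOpen U)
    (u : (Fin n → ℂ) → ℝ)
    (L : Set (OuterMeasure (Fin n → ℂ)))
    (h : ∀ K ⊆ U, IsCompact K → ∀ δ : ENNReal, 0 < δ →
      ∃ S ⊆ K, IsCompact S ∧ (∀ μ ∈ L, μ (K \ S) ≤ δ) ∧ ContinuousOn u S) :
    ∀ ε : ENNReal, 0 < ε →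
      ∃ U' ⊆ U, IsOpen U' ∧ (∀ μ ∈ L, μ U' ≤ ε) ∧ ContinuousOn u (U \ U') := by
  intro ε hε
  classical
  haveI : LocallyCompactSpace U := hU.locallyCompactSpace
  set E : CompactExhaustion U := CompactExhaustion.choice U with hE
  set K : ℕ → Set (Fin n → ℂ) := fun s => Subtype.val '' (E s) with hKdef
  have hKcompact : ∀ s, IsCompact (K s) :=
    fun s => (E.isCompact s).image continuous_subtype_val
  have hKU : ∀ s, K s ⊆ U := by
    rintro s x ⟨y, -, rfl⟩; exact y.2
  have hKmono : ∀ {a b : ℕ}, a ≤ b → K a ⊆ K b :=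
    fun hab => image_mono (E.subset hab)
  have hKint : ∀ s, K s ⊆ interior (K (s + 1)) := by
    intro s
    calc K s ⊆ Subtype.val '' interior (E (s + 1)) :=
          image_mono (E.subset_interior_succ s)
      _ ⊆ interior (K (s + 1)) :=
          (hU.isOpenMap_subtype_val).image_interior_subset _
  have hmem : ∀ x ∈ U, ∃ m, x ∈ K m := by
    intro x hx
    exact ⟨E.find ⟨x, hx⟩, ⟨⟨x, hx⟩, E.mem_find ⟨x, hx⟩, rfl⟩⟩
  have hmemint : ∀ x ∈ U, ∃ m, x ∈ interior (K m) := by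
    intro x hx
    obtain ⟨m, hm⟩ := hmem x hx
    exact ⟨m + 1, hKint m hm⟩
  -- ring sets
  set R : ℕ → Set (Fin n → ℂ) := fun s =>
    match s with
    | 0 => K 0
    | (s' + 1) => K (s' + 1) \ interior (K s') with hRdef
  have hRcomp : ∀ s, IsCompact (R s) := by
    intro s
    match s with
    | 0 => exact hKcompact 0
    | (s' + 1) => exact (hKcompact (s' + 1)).diff isOpen_interior
  have hRU : ∀ s, R s ⊆ U := by
    intro s
    match s with
    | 0 => exact hKU 0
    | (s' + 1) => exact (diff_subset).trans (hKU (s' + 1))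
  have hcover : ∀ x ∈ U, ∃ s, x ∈ R s := by
    intro x hx
    have hex : ∃ m, x ∈ K m := hmem x hx
    obtain ⟨m, hmK, hmin⟩ : ∃ m, x ∈ K m ∧ ∀ k < m, x ∉ K k :=
      ⟨Nat.find hex, Nat.find_spec hex, fun k hk => Nat.find_min hex hk⟩
    rcases m with _ | m'
    · exact ⟨0, hmK⟩
    · exact ⟨m' + 1, hmK, fun hxint =>
        hmin m' (Nat.lt_succ_self m') (interior_subset hxint)⟩
  -- choose the compact sets S s
  obtain ⟨δ, δpos, hδsum⟩ := ENNReal.exists_pos_sum_of_countable' hε.ne' ℕ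
  choose S hSsub hScomp hSmeas hScont using
    fun s => h (R s) (hRU s) (hRcomp s) (δ s) (δpos s)
  set C : Set (Fin n → ℂ) := ⋃ s, S s with hCdef
  have hCU : C ⊆ U := iUnion_subset fun s => (hSsub s).trans (hRU s)
  -- key disjointness
  have hdisj : ∀ m s : ℕ, m < s → ∀ x, x ∈ S s → x ∉ interior (K m) := by
    intro m s hms x hxS hxI
    match s, hms with
    | (s' + 1), hms =>
      have hx : x ∈ K (s' + 1) \ interior (K s') := hSsub (s' + 1) hxS
      exact hx.2 (interior_mono (hKmono (Nat.lt_succ_iff.mp hms)) hxI)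
  refine ⟨U \ C, diff_subset, ?_, ?_, ?_⟩
  · -- openness
    rw [isOpen_iff_forall_mem_open]
    intro x hx
    obtain ⟨m, hm⟩ := hmemint x hx.1
    refine ⟨interior (K m) \ ⋃ s ∈ Finset.range (m + 1), S s, ?_, ?_, ?_⟩
    · rintro y ⟨hyI, hyS⟩
      refine ⟨hKU m (interior_subset hyI), ?_⟩
      intro hyC
      obtain ⟨s, hs⟩ := mem_iUnion.1 hyC
      rcases lt_or_ge m s with hlt | hle
      · exact hdisj m s hlt y hs hyI
      · exact hyS (mem_biUnion (Finset.mem_range.2 (Nat.lt_succ_of_le hle)) hs)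
    · refine isOpen_interior.sdiff ?_
      exact isClosed_biUnion_finset fun s _ => (hScomp s).isClosed
    · refine ⟨hm, fun hxS => ?_⟩
      obtain ⟨s, -, hs⟩ := mem_iUnion₂.1 hxS
      exact hx.2 (mem_iUnion.2 ⟨s, hs⟩)
  · -- measure estimate
    intro μ hμ
    have hsub : U \ C ⊆ ⋃ s, (R s \ S s) := by
      rintro x ⟨hxU, hxC⟩
      obtain ⟨s, hs⟩ := hcover x hxU
      exact mem_iUnion.2 ⟨s, hs, fun hxS => hxC (mem_iUnion.2 ⟨s, hxS⟩)⟩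
    calc μ (U \ C) ≤ μ (⋃ s, (R s \ S s)) := measure_mono hsub
      _ ≤ ∑' s, μ (R s \ S s) := measure_iUnion_le _
      _ ≤ ∑' s, δ s := ENNReal.tsum_le_tsum fun s => hSmeas s μ hμ
      _ ≤ ε := hδsum.le
  · -- continuity
    have hUC : U \ (U \ C) = C := diff_diff_cancel_left hCU
    rw [hUC]
    intro x hx
    obtain ⟨t, hxt⟩ := mem_iUnion.1 hx
    obtain ⟨m, hm⟩ := hmemint x (hCU hx)
    have htm : t ≤ m := by
      by_contra hc
      exact hdisj m t (lt_of_not_ge hc) x hxt hm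
    have hF : ContinuousOn u (⋃ i : Fin (m + 1), S i) := by
      refine LocallyFinite.continuousOn_iUnion ?_ (fun i => (hScomp i).isClosed)
        (fun i => hScont i)
      exact locallyFinite_of_finite _
    have hxF : x ∈ ⋃ i : Fin (m + 1), S i :=
      mem_iUnion.2 ⟨⟨t, Nat.lt_succ_of_le htm⟩, hxt⟩
    have hcw : ContinuousWithinAt u (⋃ i : Fin (m + 1), S (i : ℕ)) x := hF x hxF
    have hsubF : C ∩ interior (K m) ⊆ ⋃ i : Fin (m + 1), S (i : ℕ) := by
      rintro y ⟨hyC, hyI⟩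
      obtain ⟨s, hs⟩ := mem_iUnion.1 hyC
      rcases lt_or_ge m s with hlt | hle
      · exact absurd hyI (hdisj m s hlt y hs)
      · exact mem_iUnion.2 ⟨⟨s, Nat.lt_succ_of_le hle⟩, hs⟩
    have hInt : interior (K m) ∈ nhds x := isOpen_interior.mem_nhds hm
    rw [← continuousWithinAt_inter hInt]
    exact hcw.mono hsubF
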